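/- Let 0 < μ < L, 0 ≤ ε < 1, and set L_ε = (1+ε)L, μ_ε = (1-ε)μ, κ_ε = μ_ε/L_ε, ρ_ε = (1-κ_ε)/(1+κ_ε). Suppose x₀, x₁, x*, g₀, g₁ ∈ ℝ^n and f₀, f₁, f* ∈ ℝ satisfy: the three F_{μ,L}-interpolation inequalities between (x₀,f₀,g₀), (x₁,f₁,g₁), (x*,f*,0); g₁ᵀ(x₁-x₀) ≤ 0; and g₀ᵀg₁ ≤ ε‖g₀‖‖g₁‖. Then f₁ - f* ≤ ρ_ε²(f₀ - f*). -/

import Mathlib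

open RealInnerProductSpace

/-- The `F_{μ,L}` interpolation inequality between the triples `(xi, fi, gi)` and
`(xj, fj, gj)`. -/
def InterpIneq {n : ℕ} (μ L : ℝ) (xi xj : EuclideanSpace ℝ (Fin n)) (fi fj : ℝ)
    (gi gj : EuclideanSpace ℝ (Fin n)) : Prop :=
  fi ≥ fj + ⟪gj, xi - xj⟫ + 1 / (2 * (1 - μ / L)) *
    ((1 / L) * ‖gi - gj‖ ^ 2 + μ * ‖xi - xj‖ ^ 2 - (2 * μ / L) * ⟪gj - gi, xj - xi⟫)

private lemma auxI (μ L F G S X Y : ℝ) (hμ : 0 < μ) (hμL : μ < L) (hXY : L * X = Y)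
    (h : F ≥ G + S + 1 / (2 * (1 - μ / L)) * X) : Y ≤ 2 * (L - μ) * (F - G - S) := by
  have hL : (0:ℝ) < L := hμ.trans hμL
  have hL0 : L ≠ 0 := hL.ne'
  have h1 : μ / L < 1 := (div_lt_one hL).mpr hμL
  have hd : (0:ℝ) < 2 * (1 - μ / L) := by linarith
  have h2 : 1 / (2 * (1 - μ / L)) * X ≤ F - G - S := by linarith
  rw [div_mul_eq_mul_div, div_le_iff₀ hd] at h2
  have h4 : L * (1 * X) ≤ L * ((F - G - S) * (2 * (1 - μ / L))) :=
    mul_le_mul_of_nonneg_left h2 hL.le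
  have h5 : L * ((F - G - S) * (2 * (1 - μ / L))) = 2 * (L - μ) * (F - G - S) := by
    field_simp
  rw [h5] at h4
  calc Y = L * X := hXY.symm
    _ = L * (1 * X) := by ring
    _ ≤ 2 * (L - μ) * (F - G - S) := h4

private lemma comb4 {n : ℕ} (a b c d : ℝ) (u v w z : EuclideanSpace ℝ (Fin n)) :
    ‖a • u + b • v + c • w + d • z‖ ^ 2 =
      a ^ 2 * ‖u‖ ^ 2 + b ^ 2 * ‖v‖ ^ 2 + c ^ 2 * ‖w‖ ^ 2 + d ^ 2 * ‖z‖ ^ 2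
      + 2 * (a * b) * ⟪u, v⟫ + 2 * (a * c) * ⟪u, w⟫ + 2 * (a * d) * ⟪u, z⟫
      + 2 * (b * c) * ⟪v, w⟫ + 2 * (b * d) * ⟪v, z⟫ + 2 * (c * d) * ⟪w, z⟫ := by
  rw [← real_inner_self_eq_norm_sq]
  simp only [inner_add_left, inner_add_right, real_inner_smul_left, real_inner_smul_right,
    ← real_inner_self_eq_norm_sq]
  rw [real_inner_comm v u, real_inner_comm w u, real_inner_comm z u, real_inner_comm w v,
    real_inner_comm z v, real_inner_comm z w]
  ring

set_option maxHeartbeats 8000000 in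
theorem stmt13 {n : ℕ} (μ L ε : ℝ) (hμ : 0 < μ) (hμL : μ < L) (hε0 : 0 ≤ ε) (hε1 : ε < 1)
    (x₀ x₁ xstar g₀ g₁ : EuclideanSpace ℝ (Fin n)) (f₀ f₁ fstar : ℝ)
    (h1 : InterpIneq μ L x₀ x₁ f₀ f₁ g₀ g₁)
    (h2 : InterpIneq μ L xstar x₀ fstar f₀ 0 g₀)
    (h3 : InterpIneq μ L xstar x₁ fstar f₁ 0 g₁)
    (h4 : ⟪g₁, x₁ - x₀⟫ ≤ 0)
    (h5 : ⟪g₀, g₁⟫ ≤ ε * ‖g₀‖ * ‖g₁‖) :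
    f₁ - fstar ≤
      ((1 - ((1 - ε) * μ) / ((1 + ε) * L)) / (1 + ((1 - ε) * μ) / ((1 + ε) * L))) ^ 2 *
        (f₀ - fstar) := by
  have hL : (0:ℝ) < L := hμ.trans hμL
  have hL0 : L ≠ 0 := hL.ne'
  have hεL : (0:ℝ) < (1 + ε) * L := mul_pos (by linarith) hL
  have h1εμ : (0:ℝ) < (1 - ε) * μ := mul_pos (by linarith) hμ
  have hM : (0:ℝ) < (1 + ε) * L - (1 - ε) * μ := by
    nlinarith [mul_nonneg hε0 (by linarith : (0:ℝ) ≤ L + μ)]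
  have hP : (0:ℝ) < (1 + ε) * L + (1 - ε) * μ := by linarith
  have hT : (0:ℝ) < (1 + ε) * L + 3 * ((1 - ε) * μ) := by linarith
  simp only [InterpIneq] at h1 h2 h3
  set d1 := x₀ - xstar with hd1
  set d2 := x₁ - xstar with hd2
  have hx01 : x₀ - x₁ = d1 - d2 := by rw [hd1, hd2]; abel
  have hx10 : x₁ - x₀ = d2 - d1 := by rw [hd1, hd2]; abel
  have hxs0 : xstar - x₀ = -d1 := by rw [hd1]; abel
  have hxs1 : xstar - x₁ = -d2 := by rw [hd2]; abel
  -- scalarized interpolation inequalities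
  have E1s : ‖g₀‖ ^ 2 - 2 * ⟪g₀, g₁⟫ + ‖g₁‖ ^ 2
      + μ * L * (‖d1‖ ^ 2 - 2 * ⟪d1, d2⟫ + ‖d2‖ ^ 2)
      - 2 * μ * ((⟪g₁, d2⟫ - ⟪g₁, d1⟫) - (⟪g₀, d2⟫ - ⟪g₀, d1⟫))
      ≤ 2 * (L - μ) * (f₀ - f₁ - ⟪g₁, x₀ - x₁⟫) := by
    refine auxI μ L f₀ f₁ ⟪g₁, x₀ - x₁⟫ _ _ hμ hμL ?_ h1
    rw [hx01, hx10, norm_sub_sq_real, norm_sub_sq_real]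
    simp only [inner_sub_left, inner_sub_right]
    field_simp
    ring
  have E2s : ‖g₀‖ ^ 2 + μ * L * ‖d1‖ ^ 2 - 2 * μ * ⟪g₀, d1⟫
      ≤ 2 * (L - μ) * (fstar - f₀ - ⟪g₀, xstar - x₀⟫) := by
    refine auxI μ L fstar f₀ ⟪g₀, xstar - x₀⟫ _ _ hμ hμL ?_ h2
    rw [hxs0]
    simp only [zero_sub, norm_neg, sub_zero]
    field_simp
  have E3s : ‖g₁‖ ^ 2 + μ * L * ‖d2‖ ^ 2 - 2 * μ * ⟪g₁, d2⟫
      ≤ 2 * (L - μ) * (fstar - f₁ - ⟪g₁, xstar - x₁⟫) := by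
    refine auxI μ L fstar f₁ ⟪g₁, xstar - x₁⟫ _ _ hμ hμL ?_ h3
    rw [hxs1]
    simp only [zero_sub, norm_neg, sub_zero]
    field_simp
  have hS1 : ⟪g₁, x₀ - x₁⟫ = ⟪g₁, d1⟫ - ⟪g₁, d2⟫ := by rw [hx01, inner_sub_right]
  have hS2 : ⟪g₀, xstar - x₀⟫ = -⟪g₀, d1⟫ := by rw [hxs0, inner_neg_right]
  have hS3 : ⟪g₁, xstar - x₁⟫ = -⟪g₁, d2⟫ := by rw [hxs1, inner_neg_right]
  have hS4 : ⟪g₁, x₁ - x₀⟫ = ⟪g₁, d2⟫ - ⟪g₁, d1⟫ := by rw [hx10, inner_sub_right]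
  rw [hS1] at E1s
  rw [hS2] at E2s
  rw [hS3] at E3s
  rw [hS4] at h4
  -- the angle condition, combined with AM-GM
  have E5s : 0 ≤ ε * ((1 + ε) * L - (1 - ε) * μ) ^ 2 * ‖g₀‖ ^ 2
      + ε * ((1 + ε) * L + (1 - ε) * μ) ^ 2 * ‖g₁‖ ^ 2
      - 2 * ((1 + ε) * L - (1 - ε) * μ) * ((1 + ε) * L + (1 - ε) * μ) * ⟪g₀, g₁⟫ := by
    nlinarith [mul_nonneg hε0 (sq_nonneg (((1 + ε) * L - (1 - ε) * μ) * ‖g₀‖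
        - ((1 + ε) * L + (1 - ε) * μ) * ‖g₁‖)),
      mul_nonneg (mul_nonneg hM.le hP.le) (sub_nonneg.mpr h5)]
  -- the two sum-of-squares terms
  have hq1 : (0:ℝ) ≤ ‖(L * ((1 + ε) * L - (1 - ε) * μ) * ((1 + ε) * L + 3 * ((1 - ε) * μ))) • d1
      + (-(L * ((1 + ε) * L - (1 - ε) * μ) * ((1 + ε) * L + (1 - ε) * μ))) • d2
      + (-(((1 + ε) * L - (1 - ε) * μ) * ((3 - ε) * L + (1 - ε) * μ))) • g₀
      + (((1 + ε) * L + (1 - ε) * μ) * ((3 * ε - 1) * L + (1 - ε) * μ)) • g₁‖ ^ 2 :=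
    sq_nonneg _
  rw [comb4] at hq1
  rw [real_inner_comm g₀ d1, real_inner_comm g₁ d1, real_inner_comm g₀ d2,
    real_inner_comm g₁ d2] at hq1
  have hq2 : (0:ℝ) ≤ ‖(0:ℝ) • d1 + (2 * μ * L * ((1 + ε) * L + (1 - ε) * μ)) • d2
      + (-(((1 + ε) * L - (1 - ε) * μ) * (L - μ))) • g₀
      + (-((L + μ) * ((1 + ε) * L + (1 - ε) * μ))) • g₁‖ ^ 2 :=
    sq_nonneg _
  rw [comb4] at hq2
  rw [real_inner_comm g₀ d1, real_inner_comm g₁ d1, real_inner_comm g₀ d2,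
    real_inner_comm g₁ d2] at hq2
  -- positive multipliers
  have hC1 : (0:ℝ) < μ * L * ((1 + ε) * L + 3 * ((1 - ε) * μ))
      * ((1 + ε) * L - (1 - ε) * μ) ^ 2 * ((1 + ε) * L + (1 - ε) * μ) :=
    mul_pos (mul_pos (mul_pos (mul_pos hμ hL) hT) (pow_pos hM 2)) hP
  have hC2 : (0:ℝ) < μ * L * ((1 + ε) * L + 3 * ((1 - ε) * μ))
      * ((1 + ε) * L - (1 - ε) * μ) ^ 2 * (2 * ((1 - ε) * μ)) :=
    mul_pos (mul_pos (mul_pos (mul_pos hμ hL) hT) (pow_pos hM 2)) (by linarith)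
  have hC3 : (0:ℝ) < μ * L * ((1 + ε) * L + 3 * ((1 - ε) * μ))
      * ((1 + ε) * L - (1 - ε) * μ) * ((1 + ε) * L + (1 - ε) * μ) * (2 * ((1 - ε) * μ)) :=
    mul_pos (mul_pos (mul_pos (mul_pos (mul_pos hμ hL) hT) hM) hP) (by linarith)
  have hC4 : (0:ℝ) < μ * L * (2 * (L - μ)) * ((1 + ε) * L + 3 * ((1 - ε) * μ))
      * ((1 + ε) * L - (1 - ε) * μ) * ((1 + ε) * L + (1 - ε) * μ) ^ 2 :=
    mul_pos (mul_pos (mul_pos (mul_pos (mul_pos hμ hL) (by linarith)) hT) hM) (pow_pos hP 2)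
  have hC5 : (0:ℝ) < μ * L * (2 * (L - μ)) * ((1 + ε) * L + 3 * ((1 - ε) * μ)) :=
    mul_pos (mul_pos (mul_pos hμ hL) (by linarith)) hT
  have hC7 : (0:ℝ) < ((1 + ε) * L - (1 - ε) * μ) * ((1 - ε) * μ) := mul_pos hM h1εμ
  have F1 := mul_nonneg hC1.le (sub_nonneg.mpr E1s)
  have F2 := mul_nonneg hC2.le (sub_nonneg.mpr E2s)
  have F3 := mul_nonneg hC3.le (sub_nonneg.mpr E3s)
  have F4 := mul_nonneg hC4.le (by linarith : (0:ℝ) ≤ ⟪g₁, d1⟫ - ⟪g₁, d2⟫)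
  have F5 := mul_nonneg hC5.le E5s
  have F6 := mul_nonneg (sq_nonneg μ) hq1
  have F7 := mul_nonneg hC7.le hq2
  have key : (0:ℝ) ≤ μ * L * (2 * (L - μ)) * ((1 + ε) * L + 3 * ((1 - ε) * μ)) * ((1 + ε) * L - (1 - ε) * μ) * (((1 + ε) * L - (1 - ε) * μ) ^ 2 * (f₀ - fstar) - ((1 + ε) * L + (1 - ε) * μ) ^ 2 * (f₁ - fstar)) := by
    have keyeq : μ * L * (2 * (L - μ)) * ((1 + ε) * L + 3 * ((1 - ε) * μ)) * ((1 + ε) * L - (1 - ε) * μ) * (((1 + ε) * L - (1 - ε) * μ) ^ 2 * (f₀ - fstar) - ((1 + ε) * L + (1 - ε) * μ) ^ 2 * (f₁ - fstar)) =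
        μ * L * ((1 + ε) * L + 3 * ((1 - ε) * μ)) * ((1 + ε) * L - (1 - ε) * μ) ^ 2 * ((1 + ε) * L + (1 - ε) * μ) * (2 * (L - μ) * (f₀ - f₁ - (⟪g₁, d1⟫ - ⟪g₁, d2⟫)) - (‖g₀‖ ^ 2 - 2 * ⟪g₀, g₁⟫ + ‖g₁‖ ^ 2 + μ * L * (‖d1‖ ^ 2 - 2 * ⟪d1, d2⟫ + ‖d2‖ ^ 2) - 2 * μ * ((⟪g₁, d2⟫ - ⟪g₁, d1⟫) - (⟪g₀, d2⟫ - ⟪g₀, d1⟫))))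
        + μ * L * ((1 + ε) * L + 3 * ((1 - ε) * μ)) * ((1 + ε) * L - (1 - ε) * μ) ^ 2 * (2 * ((1 - ε) * μ)) * (2 * (L - μ) * (fstar - f₀ - -⟪g₀, d1⟫) - (‖g₀‖ ^ 2 + μ * L * ‖d1‖ ^ 2 - 2 * μ * ⟪g₀, d1⟫))
        + μ * L * ((1 + ε) * L + 3 * ((1 - ε) * μ)) * ((1 + ε) * L - (1 - ε) * μ) * ((1 + ε) * L + (1 - ε) * μ) * (2 * ((1 - ε) * μ)) * (2 * (L - μ) * (fstar - f₁ - -⟪g₁, d2⟫) - (‖g₁‖ ^ 2 + μ * L * ‖d2‖ ^ 2 - 2 * μ * ⟪g₁, d2⟫))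
        + μ * L * (2 * (L - μ)) * ((1 + ε) * L + 3 * ((1 - ε) * μ)) * ((1 + ε) * L - (1 - ε) * μ) * ((1 + ε) * L + (1 - ε) * μ) ^ 2 * (⟪g₁, d1⟫ - ⟪g₁, d2⟫)
        + μ * L * (2 * (L - μ)) * ((1 + ε) * L + 3 * ((1 - ε) * μ)) * (ε * ((1 + ε) * L - (1 - ε) * μ) ^ 2 * ‖g₀‖ ^ 2 + ε * ((1 + ε) * L + (1 - ε) * μ) ^ 2 * ‖g₁‖ ^ 2 - 2 * ((1 + ε) * L - (1 - ε) * μ) * ((1 + ε) * L + (1 - ε) * μ) * ⟪g₀, g₁⟫)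
        + μ ^ 2 * ((L * ((1 + ε) * L - (1 - ε) * μ) * ((1 + ε) * L + 3 * ((1 - ε) * μ))) ^ 2 * ‖d1‖ ^ 2 + (-(L * ((1 + ε) * L - (1 - ε) * μ) * ((1 + ε) * L + (1 - ε) * μ))) ^ 2 * ‖d2‖ ^ 2 + (-(((1 + ε) * L - (1 - ε) * μ) * ((3 - ε) * L + (1 - ε) * μ))) ^ 2 * ‖g₀‖ ^ 2 + (((1 + ε) * L + (1 - ε) * μ) * ((3 * ε - 1) * L + (1 - ε) * μ)) ^ 2 * ‖g₁‖ ^ 2 + 2 * ((L * ((1 + ε) * L - (1 - ε) * μ) * ((1 + ε) * L + 3 * ((1 - ε) * μ))) * (-(L * ((1 + ε) * L - (1 - ε) * μ) * ((1 + ε) * L + (1 - ε) * μ)))) * ⟪d1, d2⟫ + 2 * ((L * ((1 + ε) * L - (1 - ε) * μ) * ((1 + ε) * L + 3 * ((1 - ε) * μ))) * (-(((1 + ε) * L - (1 - ε) * μ) * ((3 - ε) * L + (1 - ε) * μ)))) * ⟪g₀, d1⟫ + 2 * ((L * ((1 + ε) * L - (1 - ε) * μ) * ((1 + ε) * L + 3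 * ((1 - ε) * μ))) * (((1 + ε) * L + (1 - ε) * μ) * ((3 * ε - 1) * L + (1 - ε) * μ))) * ⟪g₁, d1⟫ + 2 * ((-(L * ((1 + ε) * L - (1 - ε) * μ) * ((1 + ε) * L + (1 - ε) * μ))) * (-(((1 + ε) * L - (1 - ε) * μ) * ((3 - ε) * L + (1 - ε) * μ)))) * ⟪g₀, d2⟫ + 2 * ((-(L * ((1 + ε) * L - (1 - ε) * μ) * ((1 + ε) * L + (1 - ε) * μ))) * (((1 + ε) * L + (1 - ε) * μ) * ((3 * ε - 1) * L + (1 - ε) * μ))) * ⟪g₁, d2⟫ + 2 * ((-(((1 + ε) * L - (1 - ε) * μ) * ((3 - ε) * L + (1 - ε) * μ))) * (((1 + ε) * L + (1 - ε) * μ) * ((3 * ε - 1) * L + (1 - ε) * μ))) * ⟪g₀, g₁⟫)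
        + ((1 + ε) * L - (1 - ε) * μ) * ((1 - ε) * μ) * (((0:ℝ)) ^ 2 * ‖d1‖ ^ 2 + (2 * μ * L * ((1 + ε) * L + (1 - ε) * μ)) ^ 2 * ‖d2‖ ^ 2 + (-(((1 + ε) * L - (1 - ε) * μ) * (L - μ))) ^ 2 * ‖g₀‖ ^ 2 + (-((L + μ) * ((1 + ε) * L + (1 - ε) * μ))) ^ 2 * ‖g₁‖ ^ 2 + 2 * (((0:ℝ)) * (2 * μ * L * ((1 + ε) * L + (1 - ε) * μ))) * ⟪d1, d2⟫ + 2 * (((0:ℝ)) * (-(((1 + ε) * L - (1 - ε) * μ) * (L - μ)))) * ⟪g₀, d1⟫ + 2 * (((0:ℝ)) * (-((L + μ) * ((1 + ε) * L + (1 - ε) * μ)))) * ⟪g₁, d1⟫ + 2 * ((2 * μ * L * ((1 + ε) * L + (1 - ε) * μ)) * (-(((1 + ε) * L - (1 - ε) * μ) * (L - μ)))) * ⟪g₀, d2⟫ + 2 * ((2 * μ * L * ((1 + ε) * L + (1 - ε) * μ)) * (-((L + μ) * ((1 + ε) * L + (1 - ε) * μ)))) * ⟪g₁, d2⟫ + 2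 * ((-(((1 + ε) * L - (1 - ε) * μ) * (L - μ))) * (-((L + μ) * ((1 + ε) * L + (1 - ε) * μ)))) * ⟪g₀, g₁⟫) := by ring
    rw [keyeq]
    exact add_nonneg (add_nonneg (add_nonneg (add_nonneg (add_nonneg (add_nonneg F1 F2) F3)
      F4) F5) F6) F7
  have hC : (0:ℝ) < μ * L * (2 * (L - μ)) * ((1 + ε) * L + 3 * ((1 - ε) * μ))
      * ((1 + ε) * L - (1 - ε) * μ) :=
    mul_pos (mul_pos (mul_pos (mul_pos hμ hL) (by linarith)) hT) hM
  have key2 : (0:ℝ) ≤ ((1 + ε) * L - (1 - ε) * μ) ^ 2 * (f₀ - fstar)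
      - ((1 + ε) * L + (1 - ε) * μ) ^ 2 * (f₁ - fstar) :=
    le_of_mul_le_mul_left (by simpa using key) hC
  -- rewrite the goal
  have hke : (0:ℝ) ≤ ((1 - ε) * μ) / ((1 + ε) * L) :=
    div_nonneg h1εμ.le hεL.le
  have hgoal : (1 - ((1 - ε) * μ) / ((1 + ε) * L)) / (1 + ((1 - ε) * μ) / ((1 + ε) * L))
      = ((1 + ε) * L - (1 - ε) * μ) / ((1 + ε) * L + (1 - ε) * μ) := by
    rw [div_eq_div_iff (by positivity : (0:ℝ) < 1 + ((1 - ε) * μ) / ((1 + ε) * L)).ne' hP.ne']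
    field_simp
  rw [hgoal, div_pow, div_mul_eq_mul_div, le_div_iff₀ (pow_pos hP 2)]
  linarith [key2]
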